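/- If A ⊂ X is dually K-bounded but not K-bounded, and B ⊂ X is K-bounded, then the Hausdorff–Pompeiu distance h(Ã, B̃) is infinite. -/

import Mathlib

open Pointwise

/-- If `A` is dually K-bounded but not K-bounded and `B` is K-bounded,
then `h(Ã, B̃) = ∞`. -/
theorem hausdorff_dist_infinite
    {X : Type*} [NormedAddCommGroup X] [NormedSpace ℝ X]
    (K : Set X) (hKcl : IsClosed K) (hKconv : Convex ℝ K)
    (hK0 : (0 : X) ∈ K)
    (hKcone : ∀ t : ℝ, 0 ≤ t → ∀ y ∈ K, t • y ∈ K)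
    (A B : Set X) (hA : A.Nonempty) (hB : B.Nonempty)
    (hdbA : ∀ f : X →L[ℝ] ℝ, (∀ k ∈ K, 0 ≤ f k) → BddBelow (f '' A))
    (hnbA : ¬ ∃ ℓ : ℝ, 0 ≤ ℓ ∧ A ⊆ Metric.closedBall (0 : X) ℓ + K)
    (hbB : ∃ ℓ : ℝ, 0 ≤ ℓ ∧ B ⊆ Metric.closedBall (0 : X) ℓ + K) :
    EMetric.hausdorffEdist (closure (convexHull ℝ (A + K)))
      (closure (convexHull ℝ (B + K))) = ⊤ := by
  obtain ⟨ℓ, hℓ0, hBsub⟩ := hbB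
  refine ENNReal.eq_top_of_forall_nnreal_le fun r => ?_
  set c : ℝ := ℓ + (r : ℝ) + 2 with hc
  have hc0 : 0 < c := by positivity
  -- pick a ∈ A outside c•ball + K
  have hns : ¬ A ⊆ Metric.closedBall (0 : X) c + K := fun h => hnbA ⟨c, hc0.le, h⟩
  obtain ⟨a, haA, haN⟩ := Set.not_subset.1 hns
  -- the open convex set S = ball 0 c + K
  set S : Set X := Metric.ball (0 : X) c + K with hS
  have hSopen : IsOpen S := Metric.isOpen_ball.add_right
  have hSconv : Convex ℝ S := (convex_ball 0 c).add hKconv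
  have haS : a ∉ S := fun h =>
    haN (Set.add_subset_add_right (Metric.ball_subset_closedBall) h)
  obtain ⟨f, hf⟩ := geometric_hahn_banach_point_open hSconv hSopen haS
  -- consequences of separation
  have hball : ∀ z : X, ‖z‖ < c → f a < f z := by
    intro z hz
    have hzS : z + 0 ∈ S :=
      Set.add_mem_add (by simpa [Metric.mem_ball, dist_zero_right] using hz) hK0
    simpa using hf _ hzS
  have hfa : f a < 0 := by simpa using hball 0 (by simpa using hc0)
  have hfK : ∀ k ∈ K, 0 ≤ f k := by
    intro k hk
    by_contra hneg
    push_neg at hneg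
    have ht0 : 0 ≤ f a / f k := by
      have := div_nonneg (neg_nonneg.2 hfa.le) (neg_nonneg.2 hneg.le)
      rwa [neg_div_neg_eq] at this
    have hmem : (0 : X) + (f a / f k) • k ∈ S :=
      Set.add_mem_add (by simpa using hc0) (hKcone _ ht0 k hk)
    have := hf _ hmem
    rw [map_add, map_zero, map_smul] at this
    simp only [smul_eq_mul, zero_add] at this
    rw [div_mul_cancel₀ _ (ne_of_lt hneg)] at this
    exact lt_irrefl _ this
  have hfapos : 0 ≤ -f a := by linarith
  -- norm bound : ‖f‖ ≤ -f a / (ℓ + r + 1)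
  have hd0 : (0 : ℝ) < ℓ + (r : ℝ) + 1 := by positivity
  have hnorm : ‖f‖ ≤ (-f a) / (ℓ + (r : ℝ) + 1) := by
    refine f.opNorm_le_bound (div_nonneg hfapos hd0.le) ?_
    intro x
    by_cases hx : x = 0
    · simp [hx]
    · have hxn : (0 : ℝ) < ‖x‖ := norm_pos_iff.2 hx
      set z : X := ((ℓ + (r : ℝ) + 1) / ‖x‖) • x with hzdef
      have hznorm : ‖z‖ = ℓ + (r : ℝ) + 1 := by
        rw [hzdef, norm_smul, Real.norm_eq_abs, abs_of_pos (by positivity),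
          div_mul_cancel₀ _ (ne_of_gt hxn)]
      have h1 : f a < f z := hball z (by rw [hznorm]; linarith)
      have h2 : f a < f (-z) := hball (-z) (by rw [norm_neg, hznorm]; linarith)
      rw [map_neg] at h2
      have habs : |f z| ≤ -f a := by
        rw [abs_le]; constructor <;> linarith
      have hfz : f z = ((ℓ + (r : ℝ) + 1) / ‖x‖) * f x := by
        rw [hzdef, map_smul]; simp
      rw [hfz, abs_mul, abs_of_pos (by positivity)] at habs
      rw [Real.norm_eq_abs, div_mul_eq_mul_div, le_div_iff₀ hd0]
      calc |f x| * (ℓ + (r : ℝ) + 1)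
          = ((ℓ + (r : ℝ) + 1) / ‖x‖ * |f x|) * ‖x‖ := by field_simp
        _ ≤ (-f a) * ‖x‖ := by
            apply mul_le_mul_of_nonneg_right habs hxn.le
  have hnorm' : ‖f‖ * (ℓ + (r : ℝ) + 1) ≤ -f a := by
    rwa [← le_div_iff₀ hd0]
  have hfpos : 0 < ‖f‖ := by
    rw [norm_pos_iff]
    intro h0
    rw [h0] at hfa
    simp at hfa
  -- every point of B̃ satisfies f y ≥ -(ℓ‖f‖)
  have hfB : ∀ y ∈ closure (convexHull ℝ (B + K)), -(ℓ * ‖f‖) ≤ f y := by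
    have hsub : B + K ⊆ {x | -(ℓ * ‖f‖) ≤ f x} := by
      rintro _ ⟨b, hb, k, hk, rfl⟩
      obtain ⟨d, hd, k', hk', rfl⟩ := hBsub hb
      have hdn : ‖d‖ ≤ ℓ := by
        simpa [Metric.mem_closedBall, dist_zero_right] using hd
      have h1 : ‖f d‖ ≤ ‖f‖ * ‖d‖ := f.le_opNorm d
      have h2 : 0 ≤ f k' := hfK _ hk'
      have h3 : 0 ≤ f k := hfK _ hk
      have h4 : -(‖f‖ * ‖d‖) ≤ f d := by
        rw [Real.norm_eq_abs] at h1
        have := neg_abs_le (f d)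
        linarith
      simp only [Set.mem_setOf_eq, map_add]
      nlinarith [hfpos, norm_nonneg d]
    have hconv : Convex ℝ {x : X | -(ℓ * ‖f‖) ≤ f x} := by
      intro x hx y hy s t hs ht hst
      simp only [Set.mem_setOf_eq, map_add, map_smul, smul_eq_mul] at *
      have key : (s + t) * (ℓ * ‖f‖) = ℓ * ‖f‖ := by rw [hst, one_mul]
      nlinarith [mul_le_mul_of_nonneg_left hx hs, mul_le_mul_of_nonneg_left hy ht]
    have hclo : IsClosed {x : X | -(ℓ * ‖f‖) ≤ f x} :=
      isClosed_le continuous_const f.continuous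
    exact fun y hy => closure_minimal (convexHull_min hsub hconv) hclo hy
  -- a ∈ Ã
  have haTil : a ∈ closure (convexHull ℝ (A + K)) :=
    subset_closure (subset_convexHull ℝ _ ⟨a, haA, 0, hK0, add_zero a⟩)
  refine le_trans ?_ (EMetric.infEdist_le_hausdorffEdist_of_mem haTil)
  rw [EMetric.le_infEdist]
  intro y hy
  have hreal : (r : ℝ) ≤ dist a y := by
    have h1 : f y - f a ≤ ‖f‖ * dist a y := by
      have : f y - f a = f (y - a) := by rw [map_sub]
      have h2 : ‖f (y - a)‖ ≤ ‖f‖ * ‖y - a‖ := f.le_opNorm _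
      rw [Real.norm_eq_abs] at h2
      have h3 : f (y - a) ≤ |f (y - a)| := le_abs_self _
      have h4 : ‖y - a‖ = dist a y := by rw [← dist_eq_norm, dist_comm]
      linarith [this ▸ h3, h4 ▸ h2]
    have h5 := hfB y hy
    nlinarith [hfpos, hnorm']
  calc (r : ENNReal) = ENNReal.ofReal (r : ℝ) := (ENNReal.ofReal_coe_nnreal).symm
    _ ≤ ENNReal.ofReal (dist a y) := ENNReal.ofReal_le_ofReal hreal
    _ = edist a y := (edist_dist a y).symm
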